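/- (Necessary and sufficient Schmidt-number condition.) Let ρ be a density operator on H (positive semidefinite with trace one) and 1 ≤ r ≤ min(d_A, d_B). Then ρ has Schmidt number greater than r (i.e., ρ ∉ S_r) if and only if there exists a Hermitian operator L on H with Tr(ρ L) > f_r(L). -/

import Mathlib

open scoped ComplexOrder

noncomputable section

namespace SNpaper

/-- Elementary tensor `x ⊗ y` of vectors, as a vector on the product index set. -/
def tensorVec {dA dB : ℕ} (x : Fin dA → ℂ) (y : Fin dB → ℂ) : Fin dA × Fin dB → ℂ :=
  fun p => x p.1 * y p.2

/-- `ψ` has Schmidt rank at most `r`. -/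
def SchmidtRankLE {dA dB : ℕ} (r : ℕ) (ψ : Fin dA × Fin dB → ℂ) : Prop :=
  ∃ (x : Fin r → Fin dA → ℂ) (y : Fin r → Fin dB → ℂ),
    ψ = ∑ k, tensorVec (x k) (y k)

/-- The expectation value `⟨ψ, L ψ⟩`. -/
def expVal {dA dB : ℕ} (L : Matrix (Fin dA × Fin dB) (Fin dA × Fin dB) ℂ)
    (ψ : Fin dA × Fin dB → ℂ) : ℂ :=
  dotProduct (star ψ) (L.mulVec ψ)

/-- `ψ` is a unit vector. -/
def IsUnitVec {dA dB : ℕ} (ψ : Fin dA × Fin dB → ℂ) : Prop :=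
  dotProduct (star ψ) ψ = 1

/-- `f_r(L)`: the maximal expectation value of `L` on unit vectors of Schmidt rank at most `r`. -/
def fr {dA dB : ℕ} (r : ℕ) (L : Matrix (Fin dA × Fin dB) (Fin dA × Fin dB) ℂ) : ℝ :=
  sSup { t | ∃ ψ, IsUnitVec ψ ∧ SchmidtRankLE r ψ ∧ (expVal L ψ).re = t }

/-- The rank-one projector `|ψ⟩⟨ψ|` as a matrix. -/
def projOp {n : Type*} (ψ : n → ℂ) : Matrix n n ℂ :=
  Matrix.vecMulVec ψ (star ψ)

/-- `S_r`: states of Schmidt number at most `r` (finite convex combinations of projectors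
onto unit vectors of Schmidt rank at most `r`). -/
def SNle (dA dB r : ℕ) : Set (Matrix (Fin dA × Fin dB) (Fin dA × Fin dB) ℂ) :=
  { σ | ∃ (N : ℕ) (p : Fin N → ℝ) (ψ : Fin N → (Fin dA × Fin dB → ℂ)),
      (∀ i, 0 ≤ p i) ∧ (∑ i, p i = 1) ∧
      (∀ i, IsUnitVec (ψ i)) ∧ (∀ i, SchmidtRankLE r (ψ i)) ∧
      σ = ∑ i, (p i : ℂ) • projOp (ψ i) }

/-- An orthonormal family of vectors. -/
def ONFam {n m : ℕ} (e : Fin m → Fin n → ℂ) : Prop :=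
  ∀ k l, dotProduct (star (e k)) (e l) = if k = l then 1 else 0


section Hull
open Set Module

theorem myIsCompactConvexHull {E : Type*} [NormedAddCommGroup E] [NormedSpace ℝ E]
    [FiniteDimensional ℝ E] {s : Set E} (hs : IsCompact s) :
    IsCompact (convexHull ℝ s) := by
  classical
  rcases s.eq_empty_or_nonempty with rfl | ⟨s₀, hs₀⟩
  · simp only [convexHull_empty]; exact isCompact_empty
  set D := finrank ℝ E + 1 with hD
  have hTc : Continuous (fun wz : (Fin D → ℝ) × (Fin D → E) => ∑ i, wz.1 i • wz.2 i) := by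
    apply continuous_finset_sum
    intro i _
    exact ((continuous_apply i).comp continuous_fst).smul
      ((continuous_apply i).comp continuous_snd)
  have hcomp : IsCompact ((stdSimplex ℝ (Fin D)) ×ˢ (Set.univ.pi fun _ : Fin D => s)) :=
    (isCompact_stdSimplex (𝕜 := ℝ) (ι := Fin D)).prod (isCompact_univ_pi fun _ => hs)
  have himage : convexHull ℝ s =
      (fun wz : (Fin D → ℝ) × (Fin D → E) => ∑ i, wz.1 i • wz.2 i) ''
        ((stdSimplex ℝ (Fin D)) ×ˢ (Set.univ.pi fun _ : Fin D => s)) := by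
    apply Subset.antisymm
    · intro a ha
      obtain ⟨ι, hι, z, w, hzs, hai, hwpos, hwsum, hx⟩ :=
        eq_pos_convex_span_of_mem_convexHull ha
      have hne : Nonempty ι := by
        by_contra h
        rw [not_nonempty_iff] at h
        rw [Finset.sum_eq_zero (fun i _ => (h.elim i))] at hwsum
        norm_num at hwsum
      have hcd : Fintype.card ι ≤ D := by
        have h1 := hai.finrank_vectorSpan_add_one
        have h2 : finrank ℝ (vectorSpan ℝ (Set.range z)) ≤ finrank ℝ E :=
          Submodule.finrank_le _
        omega
      set f : ι ↪ Fin D := (Fintype.equivFin ι).toEmbedding.trans (Fin.castLEEmb hcd) with hf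
      set w' : Fin D → ℝ := fun j => if h : ∃ i, f i = j then w h.choose else 0 with hw'
      set z' : Fin D → E := fun j => if h : ∃ i, f i = j then z h.choose else s₀ with hz'
      have hchoose : ∀ i : ι, (⟨i, rfl⟩ : ∃ i', f i' = f i).choose = i := fun i =>
        f.injective (⟨i, rfl⟩ : ∃ i', f i' = f i).choose_spec
      have hw'f : ∀ i, w' (f i) = w i := by
        intro i
        simp only [hw']
        rw [dif_pos ⟨i, rfl⟩]
        congr 1
        exact hchoose i
      have hz'f : ∀ i, z' (f i) = z i := by
        intro i
        simp only [hz']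
        rw [dif_pos ⟨i, rfl⟩]
        congr 1
        exact hchoose i
      have hsub : (Finset.univ.map f) ⊆ Finset.univ := Finset.subset_univ _
      have hzero : ∀ j, j ∉ Finset.univ.map f → w' j = 0 := by
        intro j hj
        simp only [hw']
        rw [dif_neg]
        rintro ⟨i, hi⟩
        exact hj (Finset.mem_map.2 ⟨i, Finset.mem_univ _, hi⟩)
      have hsum1 : ∑ j, w' j = 1 := by
        rw [← Finset.sum_subset hsub (fun j _ hj => hzero j hj), Finset.sum_map]
        rw [← hwsum]
        exact Finset.sum_congr rfl fun i _ => hw'f i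
      have hsum2 : ∑ j, w' j • z' j = a := by
        rw [← Finset.sum_subset hsub
          (fun j _ hj => by rw [hzero j hj, zero_smul]), Finset.sum_map]
        rw [← hx]
        exact Finset.sum_congr rfl fun i _ => by rw [hw'f, hz'f]
      refine ⟨(w', z'), Set.mem_prod.2 ⟨⟨?_, hsum1⟩, ?_⟩, hsum2⟩
      · intro j
        simp only [hw']
        split
        · exact (hwpos _).le
        · exact le_refl 0
      · intro j _
        simp only [hz']
        split
        · exact hzs ⟨_, rfl⟩
        · exact hs₀
    · rintro a ⟨⟨wv, zv⟩, hmem, rfl⟩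
      obtain ⟨hw, hz⟩ := Set.mem_prod.1 hmem
      have := Finset.centerMass_mem_convexHull (Finset.univ : Finset (Fin D))
        (fun i _ => hw.1 i) (by rw [hw.2]; norm_num) (fun i _ => hz i (Set.mem_univ i))
      rwa [Finset.centerMass_eq_of_sum_1 _ _ hw.2] at this
  rw [himage]
  exact hcomp.image hTc

end Hull


lemma dot_tensor {dA dB : ℕ} (a c : Fin dA → ℂ) (b d : Fin dB → ℂ) :
    dotProduct (star (tensorVec a b)) (tensorVec c d)
      = (dotProduct (star a) c) * (dotProduct (star b) d) := by
  simp only [dotProduct, tensorVec, Pi.star_apply, star_mul']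
  rw [Fintype.sum_prod_type, Finset.sum_mul_sum]
  congr 1; funext i; congr 1; funext j; ring

lemma tensor_smul_left {dA dB : ℕ} (c : ℂ) (a : Fin dA → ℂ) (b : Fin dB → ℂ) :
    tensorVec (c • a) b = c • tensorVec a b := by
  funext p; simp [tensorVec, mul_assoc]

lemma tensor_smul_right {dA dB : ℕ} (c : ℂ) (a : Fin dA → ℂ) (b : Fin dB → ℂ) :
    tensorVec a (c • b) = c • tensorVec a b := by
  funext p; simp [tensorVec]; ring

lemma tensor_sum_left {dA dB : ℕ} {m : ℕ} (a : Fin m → Fin dA → ℂ) (b : Fin dB → ℂ) :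
    tensorVec (∑ k, a k) b = ∑ k, tensorVec (a k) b := by
  funext p; simp [tensorVec, Finset.sum_mul]

lemma tensor_sum_right {dA dB : ℕ} {m : ℕ} (a : Fin dA → ℂ) (b : Fin m → Fin dB → ℂ) :
    tensorVec a (∑ k, b k) = ∑ k, tensorVec a (b k) := by
  funext p; simp [tensorVec, Finset.mul_sum]

lemma tensor_zero_left {dA dB : ℕ} (b : Fin dB → ℂ) : tensorVec (0 : Fin dA → ℂ) b = 0 := by
  funext p; simp [tensorVec]

lemma dot_self_re {m : Type*} [Fintype m] (a : m → ℂ) :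
    (dotProduct (star a) a).re = ∑ i, Complex.normSq (a i) := by
  simp only [dotProduct, Pi.star_apply]
  rw [Complex.re_sum]
  congr 1; funext i
  rw [show star (a i) = (starRingEnd ℂ) (a i) from rfl, ← Complex.normSq_eq_conj_mul_self]
  simp





lemma sum_dotProduct' {m k : Type*} [Fintype m] [Fintype k] (f : k → m → ℂ) (v : m → ℂ) :
    dotProduct (∑ i, f i) v = ∑ i, dotProduct (f i) v := by
  simp only [dotProduct, Finset.sum_apply, Finset.sum_mul]
  exact Finset.sum_comm

lemma dotProduct_sum' {m k : Type*} [Fintype m] [Fintype k] (v : m → ℂ) (f : k → m → ℂ) :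
    dotProduct v (∑ i, f i) = ∑ i, dotProduct v (f i) := by
  simp only [dotProduct, Finset.sum_apply, Finset.mul_sum]
  exact Finset.sum_comm

lemma inner_piLp_equiv_symm' {n : Type*} [Fintype n] (x y : n → ℂ) :
    inner ℂ ((WithLp.equiv 2 (n → ℂ)).symm x) ((WithLp.equiv 2 (n → ℂ)).symm y)
      = dotProduct (star x) y := by
  show dotProduct y (star x) = _
  exact dotProduct_comm _ _

open Module in
lemma boundedDecomp {dA dB r : ℕ} {ψ : Fin dA × Fin dB → ℂ}
    (hu : IsUnitVec ψ) (hs : SchmidtRankLE r ψ) :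
    ∃ (u : Fin r → Fin dA → ℂ) (w : Fin r → Fin dB → ℂ),
      (∀ k, (∑ i, Complex.normSq (u k i)) ≤ 1) ∧
      (∀ k, (∑ j, Complex.normSq (w k j)) ≤ 1) ∧
      ψ = ∑ k, tensorVec (u k) (w k) := by
  classical
  obtain ⟨x, y, hxy⟩ := hs
  -- work in Euclidean space
  set EA := EuclideanSpace ℂ (Fin dA) with hEA
  set X : Fin r → EA := fun k => (WithLp.equiv 2 (Fin dA → ℂ)).symm (x k) with hX
  set V : Submodule ℂ EA := Submodule.span ℂ (Set.range X) with hV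
  set d := finrank ℂ V with hd
  have hdr : d ≤ r := by
    have := finrank_range_le_card (R := ℂ) X
    simpa [Set.finrank] using this
  set b := stdOrthonormalBasis ℂ V with hb
  set u : Fin r → Fin dA → ℂ := fun j =>
    if h : (j : ℕ) < d then (WithLp.equiv 2 (Fin dA → ℂ)) ((b ⟨j, h⟩ : V) : EA) else 0 with hu'
  set c : Fin r → Fin r → ℂ := fun j k => dotProduct (star (u j)) (x k) with hc
  -- each x k is a combination of the u j
  have hrepr : ∀ k, x k = ∑ j, c j k • u j := by
    intro k
    have hmem : X k ∈ V := Submodule.subset_span ⟨k, rfl⟩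
    set v : V := ⟨X k, hmem⟩ with hv
    have h1 : ∑ i : Fin d, b.repr v i • ((b i : V) : EA) = X k := by
      have := congrArg (Subtype.val) (b.sum_repr v)
      simpa using this
    have h2 : ∀ i : Fin d, b.repr v i = c (Fin.castLE hdr i) k := by
      intro i
      rw [b.repr_apply_apply v i]
      have hui : u (Fin.castLE hdr i) = (WithLp.equiv 2 (Fin dA → ℂ)) ((b i : V) : EA) := by
        simp only [hu']
        rw [dif_pos (by simpa using i.isLt : ((Fin.castLE hdr i : Fin r) : ℕ) < d)]
        congr
      rw [hc]
      simp only [hui]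
      rw [← inner_piLp_equiv_symm']
      rw [Submodule.coe_inner]
      congr
    have hsub : (Finset.univ.map (Fin.castLEEmb hdr)) ⊆ Finset.univ := Finset.subset_univ _
    have hvan : ∀ j ∈ Finset.univ, j ∉ Finset.univ.map (Fin.castLEEmb hdr) →
        c j k • u j = 0 := by
      intro j _ hj
      have hjd : ¬ ((j : ℕ) < d) := by
        intro hlt
        exact hj (Finset.mem_map.2 ⟨⟨(j : ℕ), hlt⟩, Finset.mem_univ _, by
          simp [Fin.castLEEmb, Fin.castLE]⟩)
      have : u j = 0 := by simp only [hu']; rw [dif_neg hjd]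
      rw [this, smul_zero]
    rw [← Finset.sum_subset hsub hvan, Finset.sum_map]
    have hterm : ∀ i : Fin d, c ((Fin.castLEEmb hdr) i) k • u ((Fin.castLEEmb hdr) i)
        = b.repr v i • (WithLp.equiv 2 (Fin dA → ℂ)) ((b i : V) : EA) := by
      intro i
      have hui : u (Fin.castLE hdr i) = (WithLp.equiv 2 (Fin dA → ℂ)) ((b i : V) : EA) := by
        simp only [hu']
        rw [dif_pos (by simpa using i.isLt : ((Fin.castLE hdr i : Fin r) : ℕ) < d)]
        congr
      rw [Fin.castLEEmb_apply, hui, h2 i]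
    rw [Finset.sum_congr rfl (fun i _ => hterm i)]
    have h3 := congrArg (WithLp.linearEquiv 2 ℂ (Fin dA → ℂ)) h1.symm
    rw [map_sum] at h3
    simpa [hX] using h3
  set w : Fin r → Fin dB → ℂ := fun j =>
    if (j : ℕ) < d then ∑ k, c j k • y k else 0 with hw
  have hpsi : ψ = ∑ j, tensorVec (u j) (w j) := by
    rw [hxy]
    calc ∑ k, tensorVec (x k) (y k)
        = ∑ k, ∑ j, c j k • tensorVec (u j) (y k) := by
          refine Finset.sum_congr rfl fun k _ => ?_
          rw [hrepr k, tensor_sum_left]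
          exact Finset.sum_congr rfl fun j _ => tensor_smul_left _ _ _
      _ = ∑ j, ∑ k, c j k • tensorVec (u j) (y k) := Finset.sum_comm
      _ = ∑ j, tensorVec (u j) (w j) := by
          refine Finset.sum_congr rfl fun j _ => ?_
          by_cases hj : (j : ℕ) < d
          · have hwj : w j = ∑ k, c j k • y k := by simp only [hw]; rw [if_pos hj]
            rw [hwj, tensor_sum_right]
            exact Finset.sum_congr rfl fun k _ => (tensor_smul_right _ _ _).symm
          · have hu0 : u j = 0 := by simp only [hu']; rw [dif_neg hj]
            have hw0 : w j = 0 := by simp only [hw]; rw [if_neg hj]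
            simp [hu0, hw0, tensor_zero_left]
  have honu : ∀ j j' : Fin r, dotProduct (star (u j)) (u j') =
      if j = j' then (if (j : ℕ) < d then 1 else 0) else 0 := by
    intro j j'
    by_cases hjj : j = j'
    · subst hjj
      rw [if_pos rfl]
      by_cases hj : (j : ℕ) < d
      · rw [if_pos hj]
        have huj : u j = (WithLp.equiv 2 (Fin dA → ℂ)) ((b ⟨j, hj⟩ : V) : EA) := by
          simp only [hu']; rw [dif_pos hj]
        rw [huj, ← inner_piLp_equiv_symm']
        simp only [Equiv.symm_apply_apply]
        rw [← Submodule.coe_inner, orthonormal_iff_ite.1 b.orthonormal]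
        rw [if_pos rfl]
      · have hu0 : u j = 0 := by simp only [hu']; rw [dif_neg hj]
        rw [if_neg hj, hu0]
        simp
    · rw [if_neg hjj]
      by_cases hj : (j : ℕ) < d
      · by_cases hj' : (j' : ℕ) < d
        · have huj : u j = (WithLp.equiv 2 (Fin dA → ℂ)) ((b ⟨j, hj⟩ : V) : EA) := by
            simp only [hu']; rw [dif_pos hj]
          have huj' : u j' = (WithLp.equiv 2 (Fin dA → ℂ)) ((b ⟨j', hj'⟩ : V) : EA) := by
            simp only [hu']; rw [dif_pos hj']
          rw [huj, huj', ← inner_piLp_equiv_symm']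
          simp only [Equiv.symm_apply_apply]
          rw [← Submodule.coe_inner, orthonormal_iff_ite.1 b.orthonormal]
          rw [if_neg]
          intro hmk
          exact hjj (Fin.ext (by simpa using congrArg Fin.val hmk))
        · have hu0 : u j' = 0 := by simp only [hu']; rw [dif_neg hj']
          rw [hu0, dotProduct_zero]
      · have hu0 : u j = 0 := by simp only [hu']; rw [dif_neg hj]
        rw [hu0]
        simp
  -- main computation of the norm
  have key : dotProduct (star ψ) ψ
      = ∑ j, dotProduct (star (w j)) (w j) := by
    conv_lhs => rw [hpsi]
    rw [star_sum, sum_dotProduct']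
    calc ∑ j : Fin r, dotProduct (star (tensorVec (u j) (w j)))
            (∑ j' : Fin r, tensorVec (u j') (w j'))
        = ∑ j : Fin r, ∑ j' : Fin r, (if j = j' then (if (j : ℕ) < d then 1 else 0) else 0)
            * dotProduct (star (w j)) (w j') := by
          refine Finset.sum_congr rfl fun j _ => ?_
          rw [dotProduct_sum']
          exact Finset.sum_congr rfl fun j' _ => by rw [dot_tensor, honu]
      _ = ∑ j : Fin r, (if (j : ℕ) < d then 1 else 0)
            * dotProduct (star (w j)) (w j) := by
          refine Finset.sum_congr rfl fun j _ => ?_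
          rw [Finset.sum_eq_single j]
          · rw [if_pos rfl]
          · intro j' _ hne
            rw [if_neg (fun h => hne h.symm), zero_mul]
          · intro h
            exact absurd (Finset.mem_univ j) h
      _ = ∑ j : Fin r, dotProduct (star (w j)) (w j) := by
          refine Finset.sum_congr rfl fun j _ => ?_
          by_cases hj : (j : ℕ) < d
          · rw [if_pos hj, one_mul]
          · have hw0 : w j = 0 := by simp only [hw]; rw [if_neg hj]
            rw [hw0]
            simp
  have key2 : ∑ j, ∑ i, Complex.normSq (w j i) = 1 := by
    have h := congrArg Complex.re key
    rw [hu] at h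
    simp only [Complex.one_re, Complex.re_sum] at h
    calc ∑ j, ∑ i, Complex.normSq (w j i)
        = ∑ j, (dotProduct (star (w j)) (w j)).re :=
          Finset.sum_congr rfl fun j _ => (dot_self_re (w j)).symm
      _ = 1 := h.symm
  refine ⟨u, w, ?_, ?_, hpsi⟩
  · intro k
    have : (∑ i, Complex.normSq (u k i)) = (dotProduct (star (u k)) (u k)).re :=
      (dot_self_re (u k)).symm
    rw [this, honu k k, if_pos rfl]
    by_cases hk : (k : ℕ) < d
    · rw [if_pos hk]; norm_num
    · rw [if_neg hk]; norm_num
  · intro k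
    rw [← key2]
    refine Finset.single_le_sum (f := fun j => ∑ i, Complex.normSq (w j i))
      (fun j _ => ?_) (Finset.mem_univ k)
    exact Finset.sum_nonneg fun i _ => Complex.normSq_nonneg _

lemma norm_le_one_of_normSq_sum {m : Type*} [Fintype m] {a : m → ℂ} (h : ∑ i, Complex.normSq (a i) ≤ 1)
    (i : m) : ‖a i‖ ≤ 1 := by
  have h1 : Complex.normSq (a i) ≤ 1 :=
    le_trans (Finset.single_le_sum (f := fun j => Complex.normSq (a j))
      (fun j _ => Complex.normSq_nonneg _) (Finset.mem_univ i)) h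
  have h2 : ‖a i‖ ^ 2 ≤ 1 := by rw [Complex.sq_norm]; exact h1
  nlinarith [norm_nonneg (a i)]

def Fmap (dA dB r : ℕ) : ((Fin r → Fin dA → ℂ) × (Fin r → Fin dB → ℂ)) → (Fin dA × Fin dB → ℂ) :=
  fun xy => ∑ k, tensorVec (xy.1 k) (xy.2 k)

lemma Fmap_continuous (dA dB r : ℕ) : Continuous (Fmap dA dB r) := by
  apply continuous_pi
  intro p
  have : (fun xy : (Fin r → Fin dA → ℂ) × (Fin r → Fin dB → ℂ) => Fmap dA dB r xy p)
      = fun xy => ∑ k, (xy.1 k p.1) * (xy.2 k p.2) := by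
    funext xy
    simp [Fmap, tensorVec]
  rw [this]
  apply continuous_finset_sum
  intro k _
  fun_prop

lemma isUnitVec_closed (dA dB : ℕ) : IsClosed {ψ : Fin dA × Fin dB → ℂ | IsUnitVec ψ} := by
  have hc : Continuous (fun ψ : Fin dA × Fin dB → ℂ => dotProduct (star ψ) ψ) := by
    apply continuous_finset_sum
    intro p _
    exact (Complex.continuous_conj.comp (continuous_apply p)).mul (continuous_apply p)
  exact isClosed_eq hc continuous_const

lemma isCompact_K (dA dB r : ℕ) :
    IsCompact {ψ : Fin dA × Fin dB → ℂ | IsUnitVec ψ ∧ SchmidtRankLE r ψ} := by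
  classical
  set C : Set ((Fin r → Fin dA → ℂ) × (Fin r → Fin dB → ℂ)) :=
    {xy | (∀ k, ∑ i, Complex.normSq (xy.1 k i) ≤ 1) ∧
          (∀ k, ∑ j, Complex.normSq (xy.2 k j) ≤ 1) ∧
          IsUnitVec (Fmap dA dB r xy)} with hC
  have hCclosed : IsClosed C := by
    have hCeq : C = (⋂ k : Fin r, {xy : (Fin r → Fin dA → ℂ) × (Fin r → Fin dB → ℂ) |
          ∑ i, Complex.normSq (xy.1 k i) ≤ 1}) ∩
        ((⋂ k : Fin r, {xy : (Fin r → Fin dA → ℂ) × (Fin r → Fin dB → ℂ) |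
          ∑ j, Complex.normSq (xy.2 k j) ≤ 1}) ∩
        {xy | IsUnitVec (Fmap dA dB r xy)}) := by
      ext xy
      simp only [hC, Set.mem_setOf_eq, Set.mem_inter_iff, Set.mem_iInter]
    rw [hCeq]
    apply IsClosed.inter
    · apply isClosed_iInter (ι := Fin r)
      intro k
      apply isClosed_le
      · apply continuous_finset_sum
        intro i _
        exact Complex.continuous_normSq.comp ((continuous_apply i).comp
          ((continuous_apply k).comp continuous_fst))
      · exact continuous_const
    apply IsClosed.inter
    · apply isClosed_iInter (ι := Fin r)
      intro k
      apply isClosed_le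
      · apply continuous_finset_sum
        intro i _
        exact Complex.continuous_normSq.comp ((continuous_apply i).comp
          ((continuous_apply k).comp continuous_snd))
      · exact continuous_const
    · exact (isUnitVec_closed dA dB).preimage (Fmap_continuous dA dB r)
  have hCsub : C ⊆ Metric.closedBall 0 1 := by
    intro xy hxy
    rw [Metric.mem_closedBall, dist_zero_right]
    rw [Prod.norm_def]
    apply max_le
    · rw [pi_norm_le_iff_of_nonneg (by norm_num : (0:ℝ) ≤ 1)]
      intro k
      rw [pi_norm_le_iff_of_nonneg (by norm_num : (0:ℝ) ≤ 1)]
      intro i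
      exact norm_le_one_of_normSq_sum (hxy.1 k) i
    · rw [pi_norm_le_iff_of_nonneg (by norm_num : (0:ℝ) ≤ 1)]
      intro k
      rw [pi_norm_le_iff_of_nonneg (by norm_num : (0:ℝ) ≤ 1)]
      intro j
      exact norm_le_one_of_normSq_sum (hxy.2.1 k) j
  have hCcompact : IsCompact C :=
    (isCompact_closedBall 0 1).of_isClosed_subset hCclosed hCsub
  have himg : {ψ : Fin dA × Fin dB → ℂ | IsUnitVec ψ ∧ SchmidtRankLE r ψ}
      = Fmap dA dB r '' C := by
    apply Set.Subset.antisymm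
    · rintro ψ ⟨hunit, hrank⟩
      obtain ⟨u, w, hub, hwb, heq⟩ := boundedDecomp hunit hrank
      refine ⟨(u, w), ⟨hub, hwb, ?_⟩, heq.symm⟩
      show IsUnitVec (Fmap dA dB r (u, w))
      have : Fmap dA dB r (u, w) = ψ := heq.symm
      rw [this]
      exact hunit
    · rintro ψ ⟨xy, hmem, rfl⟩
      exact ⟨hmem.2.2, ⟨xy.1, xy.2, rfl⟩⟩
  rw [himg]
  exact hCcompact.image (Fmap_continuous dA dB r)





attribute [local instance] Matrix.normedAddCommGroup Matrix.normedSpace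

lemma projOp_continuous {n : Type*} [Fintype n] : Continuous (fun ψ : n → ℂ => projOp ψ) := by
  apply continuous_pi
  intro i
  apply continuous_pi
  intro j
  show Continuous (fun ψ : n → ℂ => ψ i * star (ψ j))
  exact (continuous_apply i).mul (Complex.continuous_conj.comp (continuous_apply j))

lemma projOp_isHermitian {n : Type*} (ψ : n → ℂ) : (projOp ψ).IsHermitian := by
  apply Matrix.ext
  intro i j
  simp [projOp, Matrix.conjTranspose_apply, Matrix.vecMulVec_apply, mul_comm]

lemma coe_smul_matrix {dA dB : ℕ} (t : ℝ) (M : Matrix (Fin dA × Fin dB) (Fin dA × Fin dB) ℂ) :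
    (t : ℂ) • M = t • M := by
  rw [← Complex.coe_algebraMap, algebraMap_smul]

lemma hull_subset_SNle (dA dB r : ℕ) :
    convexHull ℝ (projOp '' {ψ : Fin dA × Fin dB → ℂ | IsUnitVec ψ ∧ SchmidtRankLE r ψ})
      ⊆ SNle dA dB r := by
  classical
  intro σ hσ
  obtain ⟨ι, hι, z, w, hzs, _hai, hwpos, hwsum, hx⟩ :=
    eq_pos_convex_span_of_mem_convexHull hσ
  have hch : ∀ i : ι, ∃ g : Fin dA × Fin dB → ℂ,
      (IsUnitVec g ∧ SchmidtRankLE r g) ∧ projOp g = z i := by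
    intro i
    rcases hzs ⟨i, rfl⟩ with ⟨g, hg, hgeq⟩
    exact ⟨g, hg, hgeq⟩
  choose g hg1 hg2 using hch
  set N := Fintype.card ι with hN
  set e := Fintype.equivFin ι with he
  refine ⟨N, fun j => w (e.symm j), fun j => g (e.symm j), ?_, ?_, ?_, ?_, ?_⟩
  · exact fun j => (hwpos _).le
  · rw [← hwsum]
    exact e.symm.sum_comp w
  · exact fun j => (hg1 _).1
  · exact fun j => (hg1 _).2
  · rw [← hx]
    rw [← e.symm.sum_comp (fun i => w i • z i)]
    refine Finset.sum_congr rfl fun j _ => ?_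
    rw [coe_smul_matrix, hg2]

open Matrix in
lemma exists_Lmat {dA dB : ℕ}
    (f : Matrix (Fin dA × Fin dB) (Fin dA × Fin dB) ℂ →L[ℝ] ℝ) :
    ∃ L : Matrix (Fin dA × Fin dB) (Fin dA × Fin dB) ℂ, L.IsHermitian ∧
      ∀ A : Matrix (Fin dA × Fin dB) (Fin dA × Fin dB) ℂ, A.IsHermitian →
        (Matrix.trace (A * L)).re = f A := by
  classical
  set M : Matrix (Fin dA × Fin dB) (Fin dA × Fin dB) ℂ := fun q p => ((f (Matrix.single p q 1) : ℝ) : ℂ)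
      - Complex.I * ((f (Complex.I • Matrix.single p q 1) : ℝ) : ℂ) with hM
  have step1 : ∀ A : Matrix (Fin dA × Fin dB) (Fin dA × Fin dB) ℂ, (Matrix.trace (A * M)).re = f A := by
    intro A
    have htr : Matrix.trace (A * M) = ∑ p, ∑ q, A p q * M q p := by
      rw [Matrix.trace]
      simp only [Matrix.diag_apply, Matrix.mul_apply]
    have hz : ∀ (z : ℂ) (B : Matrix (Fin dA × Fin dB) (Fin dA × Fin dB) ℂ),
        z.re • B + z.im • (Complex.I • B) = z • B := by
      intro z B
      have h1 : z.re • B = ((z.re : ℝ) : ℂ) • B := by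
        rw [← Complex.coe_algebraMap, algebraMap_smul]
      have h2 : (((z.im : ℝ) : ℂ) * Complex.I) • B = z.im • (Complex.I • B) := by
        rw [mul_smul, ← Complex.coe_algebraMap, algebraMap_smul]
      rw [h1, ← h2, ← add_smul, Complex.re_add_im]
    have hA : A = ∑ p, ∑ q, ((A p q).re • Matrix.single p q (1:ℂ)
        + (A p q).im • (Complex.I • Matrix.single p q (1:ℂ))) := by
      conv_lhs => rw [matrix_eq_sum_single A]
      refine Finset.sum_congr rfl fun p _ => Finset.sum_congr rfl fun q _ => ?_
      rw [hz]
      rw [smul_single, smul_eq_mul, mul_one]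
    have hfA : f A = ∑ p, ∑ q, ((A p q).re * f (Matrix.single p q (1:ℂ))
        + (A p q).im * f (Complex.I • Matrix.single p q (1:ℂ))) := by
      conv_lhs => rw [hA]
      rw [map_sum]
      refine Finset.sum_congr rfl fun p _ => ?_
      rw [map_sum]
      refine Finset.sum_congr rfl fun q _ => ?_
      rw [map_add, f.map_smul, f.map_smul]
      simp [smul_eq_mul]
    rw [htr, hfA, Complex.re_sum]
    refine Finset.sum_congr rfl fun p _ => ?_
    rw [Complex.re_sum]
    refine Finset.sum_congr rfl fun q _ => ?_
    rw [hM]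
    simp only [Complex.sub_re, Complex.sub_im, Complex.mul_re, Complex.mul_im,
      Complex.ofReal_re, Complex.ofReal_im, Complex.I_re, Complex.I_im]
    ring
  refine ⟨(2⁻¹ : ℂ) • (M + Mᴴ), ?_, ?_⟩
  · show ((2⁻¹ : ℂ) • (M + Mᴴ))ᴴ = (2⁻¹ : ℂ) • (M + Mᴴ)
    rw [Matrix.conjTranspose_smul, Matrix.conjTranspose_add,
      Matrix.conjTranspose_conjTranspose, add_comm Mᴴ M]
    congr 1
    simp
  · intro A hA
    have hAM : Matrix.trace (A * Mᴴ) = star (Matrix.trace (A * M)) := by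
      have h1 : A * Mᴴ = (M * Aᴴ)ᴴ := by
        rw [Matrix.conjTranspose_mul, Matrix.conjTranspose_conjTranspose]
      rw [h1, Matrix.trace_conjTranspose, hA.eq, Matrix.trace_mul_comm]
    have h2 : A * ((2⁻¹ : ℂ) • (M + Mᴴ)) = (2⁻¹ : ℂ) • (A * M + A * Mᴴ) := by
      rw [mul_smul_comm, mul_add]
    rw [h2, Matrix.trace_smul, Matrix.trace_add, hAM]
    have hre : ((2⁻¹ : ℂ) • (Matrix.trace (A * M) + star (Matrix.trace (A * M)))).re
        = (Matrix.trace (A * M)).re := by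
      rw [smul_eq_mul]
      simp only [Complex.mul_re, Complex.add_re, Complex.add_im, Complex.star_def,
        Complex.conj_re, Complex.conj_im]
      have h12 : ((2:ℂ)⁻¹).re = 2⁻¹ := by norm_num
      have h13 : ((2:ℂ)⁻¹).im = 0 := by norm_num
      rw [h12, h13]
      ring
    rw [hre]
    exact step1 A

lemma expVal_eq_trace {dA dB : ℕ} (L : Matrix (Fin dA × Fin dB) (Fin dA × Fin dB) ℂ)
    (ψ : Fin dA × Fin dB → ℂ) :
    Matrix.trace (projOp ψ * L) = expVal L ψ := by
  rw [Matrix.trace, expVal]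
  simp only [Matrix.diag_apply, Matrix.mul_apply, projOp, Matrix.vecMulVec_apply,
    dotProduct, Matrix.mulVec, Pi.star_apply]
  rw [Finset.sum_comm]
  refine Finset.sum_congr rfl fun q _ => ?_
  rw [Finset.mul_sum]
  refine Finset.sum_congr rfl fun p _ => ?_
  ring

lemma unit_norm_le {dA dB : ℕ} {ψ : Fin dA × Fin dB → ℂ} (h : IsUnitVec ψ)
    (p : Fin dA × Fin dB) : ‖ψ p‖ ≤ 1 := by
  apply norm_le_one_of_normSq_sum (a := ψ)
  rw [← dot_self_re ψ, h]
  simp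

lemma frSet_bddAbove {dA dB : ℕ} (r : ℕ) (L : Matrix (Fin dA × Fin dB) (Fin dA × Fin dB) ℂ) :
    BddAbove { t | ∃ ψ, IsUnitVec ψ ∧ SchmidtRankLE r ψ ∧ (expVal L ψ).re = t } := by
  refine ⟨∑ q, ∑ p, ‖L q p‖, ?_⟩
  rintro t ⟨ψ, hunit, _, rfl⟩
  calc (expVal L ψ).re ≤ ‖expVal L ψ‖ := Complex.re_le_norm _
    _ ≤ ∑ q, ‖star (ψ q) * (L.mulVec ψ q)‖ := by
        rw [expVal]
        exact norm_sum_le _ _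
    _ ≤ ∑ q, ∑ p, ‖L q p‖ := by
        refine Finset.sum_le_sum fun q _ => ?_
        rw [norm_mul]
        calc ‖star (ψ q)‖ * ‖L.mulVec ψ q‖ ≤ 1 * ‖L.mulVec ψ q‖ := by
              apply mul_le_mul_of_nonneg_right _ (norm_nonneg _)
              rw [norm_star]
              exact unit_norm_le hunit q
          _ = ‖L.mulVec ψ q‖ := one_mul _
          _ ≤ ∑ p, ‖L q p * ψ p‖ := norm_sum_le _ _
          _ ≤ ∑ p, ‖L q p‖ := by
              refine Finset.sum_le_sum fun p _ => ?_
              rw [norm_mul]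
              calc ‖L q p‖ * ‖ψ p‖ ≤ ‖L q p‖ * 1 :=
                    mul_le_mul_of_nonneg_left (unit_norm_le hunit p) (norm_nonneg _)
                _ = ‖L q p‖ := mul_one _

lemma frSet_nonempty {dA dB : ℕ} (r : ℕ) (hA : 1 ≤ dA) (hB : 1 ≤ dB) (hr : 1 ≤ r)
    (L : Matrix (Fin dA × Fin dB) (Fin dA × Fin dB) ℂ) :
    { t | ∃ ψ, IsUnitVec ψ ∧ SchmidtRankLE r ψ ∧ (expVal L ψ).re = t }.Nonempty := by
  classical
  set e : Fin dA → ℂ := Pi.single ⟨0, hA⟩ 1 with he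
  set g : Fin dB → ℂ := Pi.single ⟨0, hB⟩ 1 with hg
  have hee : dotProduct (star e) e = 1 := by
    simp only [he, dotProduct, Pi.star_apply, Pi.single_apply]
    rw [Finset.sum_eq_single (⟨0, hA⟩ : Fin dA)]
    · simp
    · intro b _ hb
      simp [if_neg hb]
    · intro hmem
      exact absurd (Finset.mem_univ _) hmem
  have hgg : dotProduct (star g) g = 1 := by
    simp only [hg, dotProduct, Pi.star_apply, Pi.single_apply]
    rw [Finset.sum_eq_single (⟨0, hB⟩ : Fin dB)]
    · simp
    · intro b _ hb
      simp [if_neg hb]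
    · intro hmem
      exact absurd (Finset.mem_univ _) hmem
  refine ⟨(expVal L (tensorVec e g)).re, tensorVec e g, ?_, ?_, rfl⟩
  · show dotProduct (star (tensorVec e g)) (tensorVec e g) = 1
    rw [dot_tensor, hee, hgg, one_mul]
  · refine ⟨fun k => if k = ⟨0, hr⟩ then e else 0, fun _ => g, ?_⟩
    rw [Finset.sum_eq_single (⟨0, hr⟩ : Fin r)]
    · simp
    · intro b _ hb
      simp only [if_neg hb]
      exact tensor_zero_left g
    · intro hmem
      exact absurd (Finset.mem_univ _) hmem

lemma trace_le_fr {dA dB r : ℕ} (hA : 1 ≤ dA) (hB : 1 ≤ dB) (hr : 1 ≤ r)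
    (L : Matrix (Fin dA × Fin dB) (Fin dA × Fin dB) ℂ)
    {σ : Matrix (Fin dA × Fin dB) (Fin dA × Fin dB) ℂ} (hσ : σ ∈ SNle dA dB r) :
    (Matrix.trace (σ * L)).re ≤ fr r L := by
  obtain ⟨N, p, ψ, hp0, hp1, hunit, hrank, rfl⟩ := hσ
  have htr : Matrix.trace ((∑ i, (p i : ℂ) • projOp (ψ i)) * L)
      = ∑ i, (p i : ℂ) * expVal L (ψ i) := by
    rw [Finset.sum_mul]
    have : ∀ i : Fin N, ((p i : ℂ) • projOp (ψ i)) * L = (p i : ℂ) • (projOp (ψ i) * L) :=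
      fun i => smul_mul_assoc _ _ _
    rw [Finset.sum_congr rfl fun i _ => this i, Matrix.trace_sum]
    refine Finset.sum_congr rfl fun i _ => ?_
    rw [Matrix.trace_smul, smul_eq_mul, expVal_eq_trace]
  rw [htr, Complex.re_sum]
  have hterm : ∀ i : Fin N, ((p i : ℂ) * expVal L (ψ i)).re = p i * (expVal L (ψ i)).re := by
    intro i
    rw [Complex.mul_re]
    simp
  rw [Finset.sum_congr rfl fun i _ => hterm i]
  calc ∑ i, p i * (expVal L (ψ i)).re ≤ ∑ i, p i * fr r L := by
        refine Finset.sum_le_sum fun i _ => ?_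
        apply mul_le_mul_of_nonneg_left _ (hp0 i)
        exact le_csSup (frSet_bddAbove r L) ⟨ψ i, hunit i, hrank i, rfl⟩
    _ = fr r L := by rw [← Finset.sum_mul, hp1, one_mul]


/-- a density operator ρ has Schmidt number greater than r if and only if
there exists a Hermitian operator L with Tr(ρ L) > f_r(L). -/
theorem schmidt_number_condition (dA dB r : ℕ) (hA : 1 ≤ dA) (hB : 1 ≤ dB)
    (hr : 1 ≤ r) (hrd : r ≤ min dA dB)
    (ρ : Matrix (Fin dA × Fin dB) (Fin dA × Fin dB) ℂ)
    (hρ : ρ.PosSemidef) (htr : ρ.trace = 1) :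
    ρ ∉ SNle dA dB r ↔
      ∃ L : Matrix (Fin dA × Fin dB) (Fin dA × Fin dB) ℂ,
        L.IsHermitian ∧ fr r L < (Matrix.trace (ρ * L)).re := by
  constructor
  · intro hnot
    have hKcompact := isCompact_K dA dB r
    have hPcompact : IsCompact (projOp ''
        {ψ : Fin dA × Fin dB → ℂ | IsUnitVec ψ ∧ SchmidtRankLE r ψ}) :=
      hKcompact.image projOp_continuous
    have hHull := myIsCompactConvexHull hPcompact
    have hnotHull : ρ ∉ convexHull ℝ (projOp ''
        {ψ : Fin dA × Fin dB → ℂ | IsUnitVec ψ ∧ SchmidtRankLE r ψ}) :=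
      fun h => hnot (hull_subset_SNle dA dB r h)
    obtain ⟨f, u, hfu, hfρ⟩ := geometric_hahn_banach_closed_point
      (convex_convexHull ℝ _) hHull.isClosed hnotHull
    obtain ⟨L, hL, hLf⟩ := exists_Lmat f
    refine ⟨L, hL, ?_⟩
    have h1 : fr r L ≤ u := by
      apply csSup_le (frSet_nonempty r hA hB hr L)
      rintro t ⟨ψ, hunit, hrank, rfl⟩
      have hmem : projOp ψ ∈ convexHull ℝ (projOp ''
          {ψ : Fin dA × Fin dB → ℂ | IsUnitVec ψ ∧ SchmidtRankLE r ψ}) :=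
        subset_convexHull ℝ _ ⟨ψ, ⟨hunit, hrank⟩, rfl⟩
      have := hfu _ hmem
      rw [← expVal_eq_trace, hLf (projOp ψ) (projOp_isHermitian ψ)]
      exact this.le
    have h2 : u < (Matrix.trace (ρ * L)).re := by
      rw [hLf ρ hρ.1]
      exact hfρ
    linarith
  · rintro ⟨L, hL, hlt⟩ hmem
    have := trace_le_fr hA hB hr L hmem
    linarith
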